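/- Let U ⊆ ℝ² be open bounded with 0 ∈ U, φ: [0,T] × cl(U) → ℝ² continuous with φ(0,·) = id and 0 ∉ φ([0,T] × ∂U), and define f_T, F_T as usual. If Σ(F_T, ∂U) = ∅ (i.e., the convex hull of the rotation set of F_T on ∂U contains no integer), then deg(f_T, U, 0) = 1, and in particular φ(T,·) has a fixed point in U. -/

import Mathlib

noncomputable section

open Set Metric Bornology

/-- Clockwise polar coordinates `Ψ(θ, r) = (r cos θ, -r sin θ)`. -/
def PsiP (p : ℝ × ℝ) : ℝ × ℝ := (p.2 * Real.cos p.1, -(p.2 * Real.sin p.1))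

/-- The set `Ψ⁻¹(E)` in the open half-plane (points with positive radius mapping into `E`). -/
def preE (E : Set (ℝ × ℝ)) : Set (ℝ × ℝ) := {p : ℝ × ℝ | 0 < p.2 ∧ PsiP p ∈ E}

/-- `F` is `2π`-periodic in the first variable, on `Ψ⁻¹(E)`. -/
def PerOn (F : ℝ × ℝ → ℝ × ℝ) (E : Set (ℝ × ℝ)) : Prop :=
  ∀ p : ℝ × ℝ, p ∈ preE E → F (p.1 + 2 * Real.pi, p.2) = F p

/-- The rotation set `rot(F, E) = {F^θ(y)/(2π) : y ∈ Ψ⁻¹(E)}`. -/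
def rotSet (F : ℝ × ℝ → ℝ × ℝ) (E : Set (ℝ × ℝ)) : Set ℝ :=
  {t : ℝ | ∃ p ∈ preE E, t = (F p).1 / (2 * Real.pi)}

/-- `Σ(F, E) = ℤ ∩ conv (rot(F, E))`. -/
def SigmaSet (F : ℝ × ℝ → ℝ × ℝ) (E : Set (ℝ × ℝ)) : Set ℤ :=
  {n : ℤ | (n : ℝ) ∈ convexHull ℝ (rotSet F E)}

/-- `ν_i = (2πi, 0)`. -/
def nu (i : ℤ) : ℝ × ℝ := (2 * Real.pi * i, 0)

/-- A Brouwer degree theory on the plane, characterized by the classical axioms: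
normalization, dependence only on boundary values, homotopy invariance, additivity,
and the solution property. -/
structure DegTheory where
  deg : (ℝ × ℝ → ℝ × ℝ) → Set (ℝ × ℝ) → ℝ × ℝ → ℤ
  deg_id : ∀ (U : Set (ℝ × ℝ)) (v : ℝ × ℝ), IsOpen U → IsBounded U → v ∈ U →
    deg id U v = 1
  deg_congr : ∀ (g₁ g₂ : ℝ × ℝ → ℝ × ℝ) (U : Set (ℝ × ℝ)) (v : ℝ × ℝ),
    IsOpen U → IsBounded U → ContinuousOn g₁ (closure U) → ContinuousOn g₂ (closure U) →
    (∀ x ∈ frontier U, g₁ x = g₂ x) → (∀ x ∈ frontier U, g₁ x ≠ v) →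
    deg g₁ U v = deg g₂ U v
  deg_homotopy : ∀ (H : (ℝ × ℝ) × ℝ → ℝ × ℝ) (U : Set (ℝ × ℝ)) (v : ℝ × ℝ),
    IsOpen U → IsBounded U →
    ContinuousOn H ((closure U) ×ˢ Icc (0:ℝ) 1) →
    (∀ x ∈ frontier U, ∀ t ∈ Icc (0:ℝ) 1, H (x, t) ≠ v) →
    deg (fun x => H (x, 0)) U v = deg (fun x => H (x, 1)) U v
  deg_additive : ∀ (g : ℝ × ℝ → ℝ × ℝ) (U U₁ U₂ : Set (ℝ × ℝ)) (v : ℝ × ℝ),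
    IsOpen U → IsOpen U₁ → IsOpen U₂ → IsBounded U →
    U₁ ⊆ U → U₂ ⊆ U → Disjoint U₁ U₂ → ContinuousOn g (closure U) →
    (∀ x ∈ closure U \ (U₁ ∪ U₂), g x ≠ v) →
    deg g U v = deg g U₁ v + deg g U₂ v
  deg_exists : ∀ (g : ℝ × ℝ → ℝ × ℝ) (U : Set (ℝ × ℝ)) (v : ℝ × ℝ),
    IsOpen U → IsBounded U → ContinuousOn g (closure U) →
    deg g U v ≠ 0 → ∃ x ∈ U, g x = v

/-- `g : ℝ² → ℝ²` represents `F_ext ∘ Ψ⁻¹` for an admissible extension `F_ext` of `F`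
(`F` being defined on `Ψ⁻¹(∂U)`): `g` is continuous on the plane and agrees with
`F ∘ Ψ⁻¹` on `∂U`.  (Via `F_ext = g ∘ Ψ`, this is equivalent to the existence of a
continuous extension `F_ext` of `F` to the closed half-plane which is `2π`-periodic in
the first variable and constant on the line `r = 0`.) -/
def IsDExt (F : ℝ × ℝ → ℝ × ℝ) (U : Set (ℝ × ℝ)) (g : ℝ × ℝ → ℝ × ℝ) : Prop :=
  Continuous g ∧ ∀ p : ℝ × ℝ, p ∈ preE (frontier U) → g (PsiP p) = F p

/-- Euclidean open ball of radius `ρ` about the origin of the plane. -/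
def ball2 (ρ : ℝ) : Set (ℝ × ℝ) := {x : ℝ × ℝ | x.1 ^ 2 + x.2 ^ 2 < ρ ^ 2}

/-- Euclidean circle of radius `ρ` about the origin of the plane. -/
def sphere2 (ρ : ℝ) : Set (ℝ × ℝ) := {x : ℝ × ℝ | x.1 ^ 2 + x.2 ^ 2 = ρ ^ 2}

/-- Euclidean norm on the plane. -/
def sqnorm (x : ℝ × ℝ) : ℝ := Real.sqrt (x.1 ^ 2 + x.2 ^ 2)

/-- `Φ` is the (unique) lift, through the clockwise polar coordinates `Ψ`, of the
evolution map `φ` on `[0,T] × Ψ⁻¹(S)`: it is continuous, starts from the identity,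
projects to `φ` via `Ψ`, stays in the open half-plane, and is equivariant under the
deck transformation `θ ↦ θ + 2π`. -/
def IsLiftOn (φ : ℝ → ℝ × ℝ → ℝ × ℝ) (Φ : ℝ → ℝ × ℝ → ℝ × ℝ) (T : ℝ)
    (S : Set (ℝ × ℝ)) : Prop :=
  ContinuousOn (fun q : ℝ × (ℝ × ℝ) => Φ q.1 q.2) (Icc 0 T ×ˢ preE S) ∧
  (∀ p ∈ preE S, Φ 0 p = p) ∧
  (∀ t ∈ Icc 0 T, ∀ p ∈ preE S,
    PsiP (Φ t p) = φ t (PsiP p) ∧ 0 < (Φ t p).2 ∧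
    Φ t (p.1 + 2 * Real.pi, p.2) = ((Φ t p).1 + 2 * Real.pi, (Φ t p).2))


lemma cos_sin_eq_int (α θ : ℝ) (hc : Real.cos α = Real.cos θ) (hs : Real.sin α = Real.sin θ) :
    ∃ k : ℤ, α - θ = 2 * Real.pi * k := by
  have h : Complex.exp (α * Complex.I) = Complex.exp (θ * Complex.I) := by
    rw [Complex.exp_mul_I, Complex.exp_mul_I]
    rw [← Complex.ofReal_cos, ← Complex.ofReal_sin, ← Complex.ofReal_cos, ← Complex.ofReal_sin,
      hc, hs]
  rw [Complex.exp_eq_exp_iff_exists_int] at h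
  obtain ⟨n, hn⟩ := h
  refine ⟨n, ?_⟩
  have h2 : ((α : ℂ) - θ) * Complex.I = ((2 * Real.pi * n : ℝ) : ℂ) * Complex.I := by
    push_cast
    rw [sub_mul, hn]; ring
  have h3 : ((α : ℂ) - θ) = ((2 * Real.pi * n : ℝ) : ℂ) :=
    mul_right_cancel₀ Complex.I_ne_zero h2
  exact_mod_cast h3

lemma exists_polar' (x : ℝ × ℝ) (hx : x ≠ 0) :
    ∃ p : ℝ × ℝ, 0 < p.2 ∧ (p.2 * Real.cos p.1, -(p.2 * Real.sin p.1)) = x := by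
  set z : ℂ := ⟨x.1, -x.2⟩ with hz
  have hzne : z ≠ 0 := by
    intro h
    apply hx
    have h1 : z.re = 0 := by rw [h]; simp
    have h2 : z.im = 0 := by rw [h]; simp
    have : x.1 = 0 := h1
    have : x.2 = 0 := neg_eq_zero.mp h2
    exact Prod.ext ‹x.1 = 0› this
  refine ⟨(z.arg, ‖z‖), by simpa using norm_pos_iff.mpr hzne, ?_⟩
  have h1 := Complex.cos_arg hzne
  have h2 := Complex.sin_arg z
  have habs : (‖z‖) ≠ 0 := norm_ne_zero_iff.mpr hzne
  simp only
  have hre : z.re = x.1 := rfl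
  have him : z.im = -x.2 := rfl
  have e1 : ‖z‖ * Real.cos z.arg = x.1 := by
    rw [h1, ← hre]; field_simp
  have e2 : ‖z‖ * Real.sin z.arg = -x.2 := by
    rw [h2, ← him]; field_simp
  rw [e1, e2]; simp

theorem statement13 (D : DegTheory) (T : ℝ) (hT : 0 ≤ T)
    (U : Set (ℝ × ℝ)) (hU : IsOpen U) (hUb : IsBounded U) (h0 : (0 : ℝ × ℝ) ∈ U)
    (φ Φ : ℝ → ℝ × ℝ → ℝ × ℝ)
    (hφc : ContinuousOn (fun q : ℝ × (ℝ × ℝ) => φ q.1 q.2)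
      (Set.Icc 0 T ×ˢ closure U))
    (hφ0 : ∀ x ∈ closure U, φ 0 x = x)
    (hφne : ∀ t ∈ Set.Icc 0 T, ∀ x ∈ frontier U, φ t x ≠ 0)
    (hΦ : IsLiftOn φ Φ T (frontier U))
    (hSigma : SigmaSet (fun p => Φ T p - p) (frontier U) = ∅) :
    D.deg (fun x => φ T x - x) U 0 = 1 ∧ ∃ x ∈ U, φ T x = x := by
  have hTT : T ∈ Icc (0:ℝ) T := ⟨hT, le_refl T⟩
  have hfr0 : ∀ x ∈ frontier U, x ≠ (0 : ℝ × ℝ) := by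
    intro x hx h
    rw [hU.frontier_eq] at hx
    exact hx.2 (h ▸ h0)
  -- continuity of φ T on closure U
  have hφT : ContinuousOn (fun x => φ T x) (closure U) := by
    have : ContinuousOn ((fun q : ℝ × (ℝ × ℝ) => φ q.1 q.2) ∘ (fun x : ℝ × ℝ => (T, x)))
        (closure U) := by
      apply hφc.comp (Continuous.continuousOn (continuous_const.prodMk continuous_id))
      intro x hx
      exact ⟨hTT, hx⟩
    exact this
  have hfc : ContinuousOn (fun x => φ T x - x) (closure U) := hφT.sub continuousOn_id
  -- key boundary estimate
  have key : ∀ x ∈ frontier U, ∀ s ∈ Icc (0:ℝ) 1, s • φ T x - x ≠ 0 := by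
    intro x hx s hs h
    have hxne : x ≠ 0 := hfr0 x hx
    have hsx : s • φ T x = x := by
      have := sub_eq_zero.mp h
      exact this
    have hs0 : s ≠ 0 := by
      rintro rfl
      rw [zero_smul] at hsx
      exact hxne hsx.symm
    have hspos : 0 < s := lt_of_le_of_ne hs.1 (Ne.symm hs0)
    have hφx : φ T x = s⁻¹ • x := ((inv_smul_eq_iff₀ hs0).mpr hsx.symm).symm
    obtain ⟨p, hp2, hpx⟩ := exists_polar' x hxne
    have hpE : p ∈ preE (frontier U) := ⟨hp2, by show PsiP p ∈ frontier U; rw [PsiP, hpx]; exact hx⟩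
    obtain ⟨hproj, hqpos, -⟩ := hΦ.2.2 T hTT p hpE
    set q := Φ T p with hq
    have hPsip : PsiP p = x := by rw [PsiP, hpx]
    rw [hPsip, hφx, ← hpx] at hproj
    -- hproj : PsiP q = s⁻¹ • (p.2 * cos p.1, -(p.2 * sin p.1))
    have h1 : q.2 * Real.cos q.1 = s⁻¹ * (p.2 * Real.cos p.1) := congrArg Prod.fst hproj
    have h2 : -(q.2 * Real.sin q.1) = s⁻¹ * (-(p.2 * Real.sin p.1)) := congrArg Prod.snd hproj
    have h2' : q.2 * Real.sin q.1 = (s⁻¹ * p.2) * Real.sin p.1 := by linarith [h2]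
    have h1' : q.2 * Real.cos q.1 = (s⁻¹ * p.2) * Real.cos p.1 := by linarith [h1]
    set c := s⁻¹ * p.2 with hc
    have hcpos : 0 < c := mul_pos (inv_pos.mpr hspos) hp2
    have hA := Real.sin_sq_add_cos_sq q.1
    have hB := Real.sin_sq_add_cos_sq p.1
    have hsq : q.2 ^ 2 = c ^ 2 := by
      calc q.2 ^ 2 = (q.2 * Real.sin q.1) ^ 2 + (q.2 * Real.cos q.1) ^ 2 := by
            linear_combination (q.2 ^ 2) * hA.symm
        _ = (c * Real.sin p.1) ^ 2 + (c * Real.cos p.1) ^ 2 := by rw [h1', h2']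
        _ = c ^ 2 := by linear_combination (c ^ 2) * hB
    have hq2c : q.2 = c := by nlinarith [hqpos, hcpos, sq_nonneg (q.2 - c)]
    rw [hq2c] at h1' h2'
    have hcos : Real.cos q.1 = Real.cos p.1 := mul_left_cancel₀ (ne_of_gt hcpos) h1'
    have hsin : Real.sin q.1 = Real.sin p.1 := mul_left_cancel₀ (ne_of_gt hcpos) h2'
    obtain ⟨k, hk⟩ := cos_sin_eq_int q.1 p.1 hcos hsin
    have hmem : (k : ℝ) ∈ rotSet (fun p => Φ T p - p) (frontier U) := by
      refine ⟨p, hpE, ?_⟩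
      have hpi : (2 : ℝ) * Real.pi ≠ 0 := by positivity
      rw [show ((fun p => Φ T p - p) p).1 = q.1 - p.1 from rfl, hk]
      field_simp
    have : k ∈ SigmaSet (fun p => Φ T p - p) (frontier U) :=
      subset_convexHull ℝ _ hmem
    rw [hSigma] at this
    exact this
  -- homotopy 1 : from -id to f_T
  have hdeg1 : D.deg (fun x : ℝ × ℝ => -x) U 0 = D.deg (fun x => φ T x - x) U 0 := by
    have h := D.deg_homotopy (fun q : (ℝ × ℝ) × ℝ => q.2 • φ T q.1 - q.1) U 0 hU hUb
      (by
        apply ContinuousOn.sub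
        · exact (continuous_snd.continuousOn).smul
            (hφT.comp continuous_fst.continuousOn (fun q hq => hq.1))
        · exact continuous_fst.continuousOn)
      (by
        intro x hx t ht
        exact key x hx t ht)
    have e0 : (fun x : ℝ × ℝ => (0:ℝ) • φ T x - x) = fun x : ℝ × ℝ => -x := by
      funext x; simp
    have e1 : (fun x : ℝ × ℝ => (1:ℝ) • φ T x - x) = fun x => φ T x - x := by
      funext x; simp
    rw [← e0, ← e1]
    exact h
  -- homotopy 2 : from id to -id (rotation)
  have hdeg2 : D.deg (id : ℝ × ℝ → ℝ × ℝ) U 0 = D.deg (fun x : ℝ × ℝ => -x) U 0 := by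
    set R : (ℝ × ℝ) × ℝ → ℝ × ℝ := fun q =>
      (Real.cos (Real.pi * q.2) * q.1.1 - Real.sin (Real.pi * q.2) * q.1.2,
       Real.sin (Real.pi * q.2) * q.1.1 + Real.cos (Real.pi * q.2) * q.1.2) with hR
    have h := D.deg_homotopy R U 0 hU hUb
      (by
        apply Continuous.continuousOn
        rw [hR]
        have hcos : Continuous fun q : (ℝ × ℝ) × ℝ => Real.cos (Real.pi * q.2) :=
          Real.continuous_cos.comp (continuous_const.mul continuous_snd)
        have hsin : Continuous fun q : (ℝ × ℝ) × ℝ => Real.sin (Real.pi * q.2) :=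
          Real.continuous_sin.comp (continuous_const.mul continuous_snd)
        exact ((hcos.mul continuous_fst.fst).sub (hsin.mul continuous_fst.snd)).prodMk
          ((hsin.mul continuous_fst.fst).add (hcos.mul continuous_fst.snd)))
      (by
        intro x hx t ht h
        apply hfr0 x hx
        have h1 : Real.cos (Real.pi * t) * x.1 - Real.sin (Real.pi * t) * x.2 = 0 :=
          congrArg Prod.fst h
        have h2 : Real.sin (Real.pi * t) * x.1 + Real.cos (Real.pi * t) * x.2 = 0 :=
          congrArg Prod.snd h
        have hA := Real.sin_sq_add_cos_sq (Real.pi * t)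
        have hx1 : x.1 = 0 := by nlinarith [sq_nonneg x.1, sq_nonneg x.2]
        have hx2 : x.2 = 0 := by nlinarith [sq_nonneg x.1, sq_nonneg x.2]
        exact Prod.ext hx1 hx2)
    have e0 : (fun x : ℝ × ℝ => R (x, 0)) = id := by
      funext x; simp [hR]
    have e1 : (fun x : ℝ × ℝ => R (x, 1)) = fun x : ℝ × ℝ => -x := by
      funext x; simp [hR, Prod.ext_iff]
    rw [e0, e1] at h
    exact h
  have hid : D.deg (id : ℝ × ℝ → ℝ × ℝ) U 0 = 1 := D.deg_id U 0 hU hUb h0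
  have hdeg : D.deg (fun x => φ T x - x) U 0 = 1 := by
    rw [← hdeg1, ← hdeg2, hid]
  refine ⟨hdeg, ?_⟩
  obtain ⟨x, hxU, hxe⟩ := D.deg_exists (fun x => φ T x - x) U 0 hU hUb hfc (by rw [hdeg]; exact one_ne_zero)
  exact ⟨x, hxU, by have := sub_eq_zero.mp hxe; exact this⟩
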